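/- arXiv:1911.11189 — 4 statements merged into one kernel-verified Lean document; each statement's English description precedes it below -/
import Mathlib

section
/- Let X(x,y) = (1/2)(|x|^{2H} + |y|^{2H} − |x−y|^{2H}) for x, y ∈ ℝ^d and H ∈ (0,1]. Then X is a positive semidefinite kernel: for all finite collections x₁,…,x_n ∈ ℝ^d and real c₁,…,c_n, ∑_{i,j} c_i c_j X(x_i, x_j) ≥ 0. -/
open MeasureTheory Set Real Finset

section Aux

lemma inner_pow_psd {n d : ℕ} (x : Fin n → EuclideanSpace ℝ (Fin d)) (c : Fin n → ℝ) (m : ℕ) :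
    0 ≤ ∑ i, ∑ j, c i * c j * (inner ℝ (x i) (x j) : ℝ) ^ m := by
  have h : ∀ i j : Fin n, (inner ℝ (x i) (x j) : ℝ) ^ m
      = ∑ p : Fin m → Fin d, (∏ k, x i (p k)) * (∏ k, x j (p k)) := by
    intro i j
    have h0 : (inner ℝ (x i) (x j) : ℝ) = ∑ a, x i a * x j a := by
      simp [PiLp.inner_apply, RCLike.inner_apply, conj_trivial, mul_comm]
    rw [h0, Fintype.sum_pow]
    exact Finset.sum_congr rfl fun p _ => Finset.prod_mul_distrib
  have key : ∑ i, ∑ j, c i * c j * (inner ℝ (x i) (x j) : ℝ) ^ m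
      = ∑ p : Fin m → Fin d, (∑ i, c i * ∏ k, x i (p k)) ^ 2 := by
    simp_rw [h, Finset.mul_sum, sq, Finset.sum_mul_sum]
    rw [Finset.sum_congr rfl fun i _ => Finset.sum_comm]
    rw [Finset.sum_comm]
    refine Finset.sum_congr rfl fun p _ => Finset.sum_congr rfl fun i _ =>
      Finset.sum_congr rfl fun j _ => by ring
  rw [key]
  exact Finset.sum_nonneg fun p _ => sq_nonneg _

lemma real_exp_tsum (y : ℝ) : Real.exp y = ∑' m : ℕ, y ^ m / m.factorial := by
  rw [Real.exp_eq_exp_ℝ, NormedSpace.exp_eq_tsum_div]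

lemma exp_inner_tsum {n d : ℕ} (x : Fin n → EuclideanSpace ℝ (Fin d)) (c : Fin n → ℝ) (t : ℝ) :
    ∑ i, ∑ j, c i * c j * Real.exp (t * inner ℝ (x i) (x j)) =
      ∑' m : ℕ, ∑ i, ∑ j, c i * c j * ((t * (inner ℝ (x i) (x j) : ℝ)) ^ m / m.factorial) := by
  have hsum : ∀ (a y : ℝ), Summable (fun m : ℕ => a * ((t * y) ^ m / m.factorial)) :=
    fun a y => (Real.summable_pow_div_factorial _).mul_left a
  have h1 : ∀ i j : Fin n, c i * c j * Real.exp (t * inner ℝ (x i) (x j))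
      = ∑' m : ℕ, c i * c j * ((t * (inner ℝ (x i) (x j) : ℝ)) ^ m / m.factorial) := by
    intro i j; rw [real_exp_tsum, tsum_mul_left]
  simp_rw [h1]
  have inner_eq : ∀ i : Fin n,
      (∑ j, ∑' m : ℕ, c i * c j * ((t * (inner ℝ (x i) (x j) : ℝ)) ^ m / m.factorial))
      = ∑' m : ℕ, ∑ j, c i * c j * ((t * (inner ℝ (x i) (x j) : ℝ)) ^ m / m.factorial) :=
    fun i => (Summable.tsum_finsetSum fun j _ => hsum _ _).symm
  rw [Finset.sum_congr rfl fun i _ => inner_eq i,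
    (Summable.tsum_finsetSum fun i _ => summable_sum fun j _ => hsum _ _).symm]

lemma exp_inner_term_eq {n d : ℕ} (x : Fin n → EuclideanSpace ℝ (Fin d)) (c : Fin n → ℝ)
    (t : ℝ) (m : ℕ) :
    ∑ i, ∑ j, c i * c j * ((t * (inner ℝ (x i) (x j) : ℝ)) ^ m / m.factorial)
      = (t ^ m / m.factorial) * ∑ i, ∑ j, c i * c j * (inner ℝ (x i) (x j) : ℝ) ^ m := by
  simp_rw [Finset.mul_sum]
  refine sum_congr rfl fun i _ => sum_congr rfl fun j _ => by rw [mul_pow]; ring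

lemma exp_inner_ge {n d : ℕ} (x : Fin n → EuclideanSpace ℝ (Fin d)) (c : Fin n → ℝ)
    {t : ℝ} (ht : 0 ≤ t) :
    (∑ i, c i) ^ 2 ≤ ∑ i, ∑ j, c i * c j * Real.exp (t * inner ℝ (x i) (x j)) := by
  rw [exp_inner_tsum]
  have hsum : ∀ (a y : ℝ), Summable (fun m : ℕ => a * ((t * y) ^ m / m.factorial)) :=
    fun a y => (Real.summable_pow_div_factorial _).mul_left a
  have hS : Summable (fun m : ℕ =>
      ∑ i, ∑ j, c i * c j * ((t * (inner ℝ (x i) (x j) : ℝ)) ^ m / m.factorial)) :=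
    summable_sum fun i _ => summable_sum fun j _ => hsum _ _
  have h0 : (∑ i, c i) ^ 2
      = ∑ i, ∑ j, c i * c j * ((t * (inner ℝ (x i) (x j) : ℝ)) ^ 0 / (0:ℕ).factorial) := by
    simp [sq, Finset.sum_mul_sum]
  rw [h0]
  refine Summable.le_tsum hS 0 fun m _ => ?_
  rw [exp_inner_term_eq]
  exact mul_nonneg (div_nonneg (pow_nonneg ht m) (Nat.cast_nonneg _)) (inner_pow_psd x c m)

lemma kernel_pointwise_nonneg {n d : ℕ} (x : Fin n → EuclideanSpace ℝ (Fin d)) (c : Fin n → ℝ)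
    {t : ℝ} (ht : 0 ≤ t) :
    0 ≤ ∑ i, ∑ j, c i * c j *
      ((1 - Real.exp (-(‖x i‖ ^ 2 * t))) + (1 - Real.exp (-(‖x j‖ ^ 2 * t)))
        - (1 - Real.exp (-(‖x i - x j‖ ^ 2 * t)))) := by
  set a : Fin n → ℝ := fun i => Real.exp (-(‖x i‖ ^ 2 * t)) with ha
  have hexp : ∀ i j, Real.exp (-(‖x i - x j‖ ^ 2 * t))
      = a i * a j * Real.exp ((2 * t) * inner ℝ (x i) (x j)) := by
    intro i j
    rw [ha]
    simp only []
    rw [← Real.exp_add, ← Real.exp_add]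
    congr 1
    have hns : ‖x i - x j‖ ^ 2 = ‖x i‖ ^ 2 - 2 * inner ℝ (x i) (x j) + ‖x j‖ ^ 2 :=
      norm_sub_sq_real (x i) (x j)
    rw [hns]; ring
  have e1 : (∑ i, c i * (1 - a i)) ^ 2 = ∑ i, ∑ j, (c i * (1 - a i)) * (c j * (1 - a j)) := by
    rw [sq, Finset.sum_mul_sum]
  have e2 : (∑ i, c i * a i) ^ 2 = ∑ i, ∑ j, (c i * a i) * (c j * a j) := by
    rw [sq, Finset.sum_mul_sum]
  have key : ∑ i, ∑ j, c i * c j *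
      ((1 - Real.exp (-(‖x i‖ ^ 2 * t))) + (1 - Real.exp (-(‖x j‖ ^ 2 * t)))
        - (1 - Real.exp (-(‖x i - x j‖ ^ 2 * t))))
      = (∑ i, c i * (1 - a i)) ^ 2 +
        ((∑ i, ∑ j, (c i * a i) * (c j * a j) * Real.exp ((2 * t) * inner ℝ (x i) (x j)))
          - (∑ i, c i * a i) ^ 2) := by
    rw [e1, e2, ← Finset.sum_sub_distrib, ← Finset.sum_add_distrib]
    refine sum_congr rfl fun i _ => ?_
    rw [← Finset.sum_sub_distrib, ← Finset.sum_add_distrib]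
    refine sum_congr rfl fun j _ => ?_
    rw [hexp i j]; ring
  rw [key]
  have h2 := exp_inner_ge x (fun i => c i * a i) (by linarith : (0:ℝ) ≤ 2 * t)
  have h3 := sq_nonneg (∑ i, c i * (1 - a i))
  linarith

lemma one_sub_exp_le {u : ℝ} : 1 - Real.exp (-u) ≤ u := by
  have := Real.add_one_le_exp (-u); linarith

lemma one_sub_exp_nonneg {u : ℝ} (hu : 0 ≤ u) : 0 ≤ 1 - Real.exp (-u) := by
  have : Real.exp (-u) ≤ 1 := Real.exp_le_one_iff.mpr (by linarith)
  linarith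

lemma fBm_integrable {H : ℝ} (hH0 : 0 < H) (hH1 : H < 1) {a : ℝ} (ha : 0 ≤ a) :
    IntegrableOn (fun t => (1 - Real.exp (-(a * t))) * t ^ (-1 - H)) (Ioi (0:ℝ)) volume := by
  have hmeas : ∀ s : Set ℝ, AEStronglyMeasurable
      (fun t : ℝ => (1 - Real.exp (-(a * t))) * t ^ (-1 - H)) (volume.restrict s) := by
    intro s
    apply Measurable.aestronglyMeasurable
    fun_prop
  have hsplit : Ioi (0:ℝ) = Ioc (0:ℝ) 1 ∪ Ioi (1:ℝ) := (Set.Ioc_union_Ioi_eq_Ioi zero_le_one).symm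
  rw [hsplit]
  apply IntegrableOn.union
  · have hg : IntegrableOn (fun t : ℝ => a * t ^ (-H)) (Ioc (0:ℝ) 1) volume := by
      refine Integrable.const_mul ?_ a
      exact ((intervalIntegral.integrableOn_Ioo_rpow_iff one_pos).mpr
        (by linarith : (-1:ℝ) < -H)).congr_set_ae Ioo_ae_eq_Ioc.symm
    refine Integrable.mono hg (hmeas _) ?_
    rw [ae_restrict_iff' measurableSet_Ioc]
    filter_upwards with t ht
    obtain ⟨ht0, _⟩ := ht
    have htp : (0:ℝ) < t ^ (-1 - H) := Real.rpow_pos_of_pos ht0 _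
    have hb1 : 0 ≤ 1 - Real.exp (-(a * t)) := one_sub_exp_nonneg (by positivity)
    have hb2 : 1 - Real.exp (-(a * t)) ≤ a * t := one_sub_exp_le
    rw [Real.norm_of_nonneg (by positivity), Real.norm_of_nonneg (by positivity)]
    have key : (a * t) * t ^ (-1 - H) = a * t ^ (-H) := by
      rw [mul_assoc]
      congr 1
      rw [show (-H) = 1 + (-1 - H) by ring, Real.rpow_add ht0, Real.rpow_one]
    calc (1 - Real.exp (-(a * t))) * t ^ (-1 - H) ≤ (a * t) * t ^ (-1 - H) := by
          exact mul_le_mul_of_nonneg_right hb2 htp.le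
      _ = a * t ^ (-H) := key
  · have hg : IntegrableOn (fun t : ℝ => t ^ (-1 - H)) (Ioi (1:ℝ)) volume :=
      integrableOn_Ioi_rpow_of_lt (by linarith) one_pos
    refine Integrable.mono hg (hmeas _) ?_
    rw [ae_restrict_iff' measurableSet_Ioi]
    filter_upwards with t ht
    have ht0 : (0:ℝ) < t := lt_trans one_pos ht
    have htp : (0:ℝ) < t ^ (-1 - H) := Real.rpow_pos_of_pos ht0 _
    have hb1 : 0 ≤ 1 - Real.exp (-(a * t)) := one_sub_exp_nonneg (by positivity)
    have hb2 : 1 - Real.exp (-(a * t)) ≤ 1 := by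
      have := Real.exp_pos (-(a * t)); linarith
    rw [Real.norm_of_nonneg (by positivity), Real.norm_of_nonneg htp.le]
    nlinarith

noncomputable def CH (H : ℝ) : ℝ := ∫ t in Ioi (0:ℝ), (1 - Real.exp (-t)) * t ^ (-1 - H)

lemma CH_pos {H : ℝ} (hH0 : 0 < H) (hH1 : H < 1) : 0 < CH H := by
  have hint : IntegrableOn (fun t => (1 - Real.exp (-(1 * t))) * t ^ (-1 - H)) (Ioi (0:ℝ))
      volume := fBm_integrable hH0 hH1 zero_le_one
  have hint' : IntegrableOn (fun t => (1 - Real.exp (-t)) * t ^ (-1 - H)) (Ioi (0:ℝ)) volume := by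
    simpa using hint
  have hnn : 0 ≤ᵐ[volume.restrict (Ioi (0:ℝ))] fun t => (1 - Real.exp (-t)) * t ^ (-1 - H) := by
    have : ∀ᵐ t ∂(volume.restrict (Ioi (0:ℝ))),
        0 ≤ (1 - Real.exp (-t)) * t ^ (-1 - H) := by
      rw [ae_restrict_iff' measurableSet_Ioi]
      filter_upwards with t ht
      exact mul_nonneg (one_sub_exp_nonneg (le_of_lt ht)) (Real.rpow_pos_of_pos ht _).le
    exact this
  rw [CH, setIntegral_pos_iff_support_of_nonneg_ae hnn hint']
  have hsupp : Ioi (0:ℝ) ⊆ Function.support fun t => (1 - Real.exp (-t)) * t ^ (-1 - H) := by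
    intro t ht
    have h1 : 0 < 1 - Real.exp (-t) := by
      have : Real.exp (-t) < 1 := Real.exp_lt_one_iff.mpr (by linarith [Set.mem_Ioi.mp ht])
      linarith
    exact ne_of_gt (mul_pos h1 (Real.rpow_pos_of_pos ht _))
  have hvol : (0:ENNReal) < volume (Ioi (0:ℝ)) := by simp [Real.volume_Ioi]
  exact lt_of_lt_of_le hvol (measure_mono (Set.subset_inter hsupp Set.Subset.rfl))

lemma fBm_scaling {H : ℝ} (hH0 : 0 < H) (hH1 : H < 1) {r : ℝ} (hr : 0 ≤ r) :
    ∫ t in Ioi (0:ℝ), (1 - Real.exp (-(r * t))) * t ^ (-1 - H) = r ^ H * CH H := by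
  rcases eq_or_lt_of_le hr with h | h
  · simp [← h, Real.zero_rpow (ne_of_gt hH0)]
  · have key := integral_comp_mul_left_Ioi (fun u => (1 - Real.exp (-u)) * u ^ (-1 - H)) 0 h
    rw [mul_zero] at key
    have lhs_eq : ∫ t in Ioi (0:ℝ), (1 - Real.exp (-(r * t))) * (r * t) ^ (-1 - H)
        = r ^ (-1 - H) * ∫ t in Ioi (0:ℝ), (1 - Real.exp (-(r * t))) * t ^ (-1 - H) := by
      rw [← integral_const_mul]
      refine setIntegral_congr_fun measurableSet_Ioi fun t ht => ?_
      rw [Real.mul_rpow h.le (le_of_lt ht)]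
      ring
    rw [lhs_eq] at key
    rw [smul_eq_mul] at key
    rw [show (∫ (x : ℝ) in Ioi (0:ℝ), (fun u => (1 - Real.exp (-u)) * u ^ (-1 - H)) x)
      = CH H from rfl] at key
    have h2 : r ^ (1 + H) * r ^ (-1 - H) = 1 := by
      rw [← Real.rpow_add h]; norm_num
    have : ∫ t in Ioi (0:ℝ), (1 - Real.exp (-(r * t))) * t ^ (-1 - H)
        = r ^ (1 + H) * (r⁻¹ * CH H) := by
      rw [← key, ← mul_assoc, h2, one_mul]
    rw [this]
    rw [show r⁻¹ = r ^ (-1:ℝ) by rw [Real.rpow_neg_one], ← mul_assoc, ← Real.rpow_add h]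
    norm_num

end Aux

theorem fBm_kernel_posSemidef (d : ℕ) (hd : 1 ≤ d) (H : ℝ)
    (hH : H ∈ Set.Ioc (0:ℝ) 1)
    (X : EuclideanSpace ℝ (Fin d) → EuclideanSpace ℝ (Fin d) → ℝ)
    (hX : ∀ x y, X x y = (1/2) * (‖x‖ ^ (2*H) + ‖y‖ ^ (2*H) - ‖x - y‖ ^ (2*H))) :
    ∀ (n : ℕ) (x : Fin n → EuclideanSpace ℝ (Fin d)) (c : Fin n → ℝ),
      0 ≤ ∑ i, ∑ j, c i * c j * X (x i) (x j) := by
  obtain ⟨hH0, hH1'⟩ := hH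
  intro n x c
  rcases lt_or_eq_of_le hH1' with hH1 | hH1
  · -- H < 1 : integral representation
    have hC := CH_pos hH0 hH1
    have hrep : ∀ v : EuclideanSpace ℝ (Fin d), ‖v‖ ^ (2*H)
        = (CH H)⁻¹ * ∫ t in Ioi (0:ℝ), (1 - Real.exp (-(‖v‖^2 * t))) * t ^ (-1 - H) := by
      intro v
      rw [fBm_scaling hH0 hH1 (by positivity : (0:ℝ) ≤ ‖v‖^2)]
      rw [← mul_assoc, mul_comm ((CH H)⁻¹), mul_assoc, inv_mul_cancel₀ hC.ne', mul_one]
      rw [← Real.rpow_natCast ‖v‖ 2, ← Real.rpow_mul (norm_nonneg v)]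
      norm_num
    set p : ℝ := -1 - H with hp
    set F : ℝ → ℝ → ℝ := fun a t => (1 - Real.exp (-(a * t))) * t ^ p with hF
    have hFint : ∀ v : EuclideanSpace ℝ (Fin d),
        IntegrableOn (F (‖v‖^2)) (Ioi (0:ℝ)) volume :=
      fun v => fBm_integrable hH0 hH1 (by positivity)
    set g : Fin n → Fin n → ℝ → ℝ := fun i j t =>
      ((CH H)⁻¹ * (1/2) * (c i * c j)) *
        (F (‖x i‖^2) t + F (‖x j‖^2) t - F (‖x i - x j‖^2) t) with hg
    have hgint : ∀ i j, IntegrableOn (g i j) (Ioi (0:ℝ)) volume := fun i j =>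
      ((((hFint (x i)).add (hFint (x j))).sub (hFint (x i - x j))).const_mul _)
    have hterm : ∀ i j, c i * c j * X (x i) (x j) = ∫ t in Ioi (0:ℝ), g i j t := by
      intro i j
      have hsub : ∫ t in Ioi (0:ℝ),
          (F (‖x i‖^2) t + F (‖x j‖^2) t - F (‖x i - x j‖^2) t)
          = (∫ t in Ioi (0:ℝ), F (‖x i‖^2) t) + (∫ t in Ioi (0:ℝ), F (‖x j‖^2) t)
            - ∫ t in Ioi (0:ℝ), F (‖x i - x j‖^2) t := by
        have h1 : Integrable (fun t => F (‖x i‖^2) t + F (‖x j‖^2) t)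
            (volume.restrict (Ioi (0:ℝ))) := (hFint (x i)).add (hFint (x j))
        rw [integral_sub h1 (hFint (x i - x j)), integral_add (hFint (x i)) (hFint (x j))]
      rw [hg]
      simp only []
      rw [integral_const_mul, hsub, hX]
      rw [hrep (x i), hrep (x j), hrep (x i - x j)]
      ring
    have hsum : ∑ i, ∑ j, c i * c j * X (x i) (x j)
        = ∫ t in Ioi (0:ℝ), ∑ i, ∑ j, g i j t := by
      rw [integral_finset_sum _ fun i _ => integrable_finset_sum _ fun j _ => hgint i j]
      refine Finset.sum_congr rfl fun i _ => ?_
      rw [integral_finset_sum _ fun j _ => hgint i j]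
      exact Finset.sum_congr rfl fun j _ => hterm i j
    rw [hsum]
    refine setIntegral_nonneg measurableSet_Ioi fun t ht => ?_
    have ht0 : (0:ℝ) < t := ht
    have hker := kernel_pointwise_nonneg x c ht0.le
    have htp : (0:ℝ) < t ^ p := Real.rpow_pos_of_pos ht0 _
    have hfac : ∑ i, ∑ j, g i j t
        = ((CH H)⁻¹ * (1/2) * t ^ p) * ∑ i, ∑ j, c i * c j *
          ((1 - Real.exp (-(‖x i‖ ^ 2 * t))) + (1 - Real.exp (-(‖x j‖ ^ 2 * t)))
            - (1 - Real.exp (-(‖x i - x j‖ ^ 2 * t)))) := by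
      simp_rw [Finset.mul_sum]
      refine Finset.sum_congr rfl fun i _ => Finset.sum_congr rfl fun j _ => ?_
      rw [hg, hF]
      simp only []
      ring
    rw [hfac]
    have : (0:ℝ) ≤ (CH H)⁻¹ * (1/2) * t ^ p := by positivity
    exact mul_nonneg this hker
  · -- H = 1 : the kernel is the inner product
    have hXij : ∀ v w : EuclideanSpace ℝ (Fin d), X v w = (inner ℝ v w : ℝ) ^ 1 := by
      intro v w
      have h2 : ∀ u : EuclideanSpace ℝ (Fin d), ‖u‖ ^ (2*H) = ‖u‖ ^ (2:ℕ) := by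
        intro u
        rw [hH1, mul_one, show (2:ℝ) = ((2:ℕ):ℝ) by norm_num, Real.rpow_natCast]
      have hns : ‖v - w‖ ^ 2 = ‖v‖ ^ 2 - 2 * inner ℝ v w + ‖w‖ ^ 2 := norm_sub_sq_real v w
      rw [hX, h2, h2, h2, pow_one, hns]
      ring
    calc (0:ℝ) ≤ ∑ i, ∑ j, c i * c j * (inner ℝ (x i) (x j) : ℝ) ^ 1 := inner_pow_psd x c 1
      _ = ∑ i, ∑ j, c i * c j * X (x i) (x j) :=
        Finset.sum_congr rfl fun i _ => Finset.sum_congr rfl fun j _ => by rw [hXij]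
end

section
/- Let d = 2 and define the map τ on a suitable open subset of ℝ² × ℝ² (with fixed x ∈ ℝ²) sending (y,z) to (g₁,g₂,h₁,h₂) with g₁ = (|x−y| − |x−z|)/2, h₁ = (|x−y| + |x−z|)/2, g₂ = (|x−y| arcsin((y₁−x₁)/|x−y|) − |x−z| arcsin((z₁−x₁)/|x−z|))/2, h₂ = (|x−y| arcsin((y₁−x₁)/|x−y|) + |x−z| arcsin((z₁−x₁)/|x−z|))/2. Then on the set g = 0 (i.e., y = z), the Jacobian determinant of the inverse map (g,h) ↦ (y,z) equals 4. -/
/-- The inverse change of variables `(g,h) ↦ (y,z)` of the 2D stationary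
phase analysis: `y = x + (h₁+g₁)(sin α', cos α')` with
`α' = (h₂+g₂)/(h₁+g₁)`, and similarly for `z` with `−g`. -/
noncomputable def tauInv (x : ℝ × ℝ) (p : Fin 4 → ℝ) : Fin 4 → ℝ :=
  ![x.1 + (p 2 + p 0) * Real.sin ((p 3 + p 1) / (p 2 + p 0)),
    x.2 + (p 2 + p 0) * Real.cos ((p 3 + p 1) / (p 2 + p 0)),
    x.1 + (p 2 - p 0) * Real.sin ((p 3 - p 1) / (p 2 - p 0)),
    x.2 + (p 2 - p 0) * Real.cos ((p 3 - p 1) / (p 2 - p 0))]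

noncomputable def Uc (ε : ℝ) : (Fin 4 → ℝ) →L[ℝ] ℝ :=
  ContinuousLinearMap.proj 2 + ε • ContinuousLinearMap.proj 0

noncomputable def Vc (ε : ℝ) : (Fin 4 → ℝ) →L[ℝ] ℝ :=
  ContinuousLinearMap.proj 3 + ε • ContinuousLinearMap.proj 1

noncomputable def Lsin (ε : ℝ) (p : Fin 4 → ℝ) : (Fin 4 → ℝ) →L[ℝ] ℝ :=
  (Real.sin ((p 3 + ε * p 1) / (p 2 + ε * p 0)) -
      (p 3 + ε * p 1) / (p 2 + ε * p 0) * Real.cos ((p 3 + ε * p 1) / (p 2 + ε * p 0))) • Uc ε +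
    Real.cos ((p 3 + ε * p 1) / (p 2 + ε * p 0)) • Vc ε

noncomputable def Lcos (ε : ℝ) (p : Fin 4 → ℝ) : (Fin 4 → ℝ) →L[ℝ] ℝ :=
  (Real.cos ((p 3 + ε * p 1) / (p 2 + ε * p 0)) +
      (p 3 + ε * p 1) / (p 2 + ε * p 0) * Real.sin ((p 3 + ε * p 1) / (p 2 + ε * p 0))) • Uc ε -
    Real.sin ((p 3 + ε * p 1) / (p 2 + ε * p 0)) • Vc ε

lemma hasFDerivAt_uv (ε : ℝ) (p : Fin 4 → ℝ) :
    HasFDerivAt (fun q : Fin 4 → ℝ => q 2 + ε * q 0) (Uc ε) p ∧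
    HasFDerivAt (fun q : Fin 4 → ℝ => q 3 + ε * q 1) (Vc ε) p :=
  ⟨(hasFDerivAt_apply 2 p).add ((hasFDerivAt_apply 0 p).const_mul ε),
   (hasFDerivAt_apply 3 p).add ((hasFDerivAt_apply 1 p).const_mul ε)⟩

lemma aux_sin (ε c : ℝ) {p : Fin 4 → ℝ} (h : p 2 + ε * p 0 ≠ 0) :
    HasFDerivAt
      (fun q : Fin 4 → ℝ => c + (q 2 + ε * q 0) * Real.sin ((q 3 + ε * q 1) / (q 2 + ε * q 0)))
      (Lsin ε p) p := by
  obtain ⟨hu, hv⟩ := hasFDerivAt_uv ε p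
  have hinv := (hasDerivAt_inv h).comp_hasFDerivAt p hu
  have hw := hv.mul hinv
  have hfin := (hu.mul hw.sin).const_add c
  simp only [Function.comp, Pi.mul_def, ← div_eq_mul_inv] at hfin
  refine hfin.congr_fderiv ?_
  ext w
  simp only [Lsin, ContinuousLinearMap.add_apply, ContinuousLinearMap.smul_apply,
    smul_eq_mul, ContinuousLinearMap.coe_smul', Pi.smul_apply, div_eq_mul_inv]
  field_simp
  ring

lemma aux_cos (ε c : ℝ) {p : Fin 4 → ℝ} (h : p 2 + ε * p 0 ≠ 0) :
    HasFDerivAt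
      (fun q : Fin 4 → ℝ => c + (q 2 + ε * q 0) * Real.cos ((q 3 + ε * q 1) / (q 2 + ε * q 0)))
      (Lcos ε p) p := by
  obtain ⟨hu, hv⟩ := hasFDerivAt_uv ε p
  have hinv := (hasDerivAt_inv h).comp_hasFDerivAt p hu
  have hw := hv.mul hinv
  have hfin := (hu.mul hw.cos).const_add c
  simp only [Function.comp, Pi.mul_def, ← div_eq_mul_inv] at hfin
  refine hfin.congr_fderiv ?_
  ext w
  simp only [Lcos, ContinuousLinearMap.add_apply, ContinuousLinearMap.smul_apply,
    ContinuousLinearMap.sub_apply, smul_eq_mul, ContinuousLinearMap.coe_smul',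
    Pi.smul_apply, div_eq_mul_inv]
  field_simp
  ring


lemma det_fin_four' (a b c d e f g h i j k l m n o q : ℝ) :
    Matrix.det !![a,b,c,d; e,f,g,h; i,j,k,l; m,n,o,q] =
    a*(f*(k*q-l*o)-g*(j*q-l*n)+h*(j*o-k*n))
    - b*(e*(k*q-l*o)-g*(i*q-l*m)+h*(i*o-k*m))
    + c*(e*(j*q-l*n)-f*(i*q-l*m)+h*(i*n-j*m))
    - d*(e*(j*o-k*n)-f*(i*o-k*m)+g*(i*n-j*m)) := by
  simp [Matrix.det_succ_row_zero, Fin.sum_univ_succ, Fin.succAbove_of_lt_succ, Fin.succAbove_of_succ_le]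
  ring

set_option maxHeartbeats 1600000 in
theorem jacobian_tauInv_eq_four (x : ℝ × ℝ) (p : Fin 4 → ℝ)
    (hg1 : p 0 = 0) (hg2 : p 1 = 0) (hh1 : 0 < p 2) :
    Matrix.det (Matrix.of fun i j : Fin 4 =>
      fderiv ℝ (tauInv x) p (Pi.single j 1) i) = 4 := by
  have hne1 : p 2 + 1 * p 0 ≠ 0 := by rw [hg1]; simpa using hh1.ne'
  have hne2 : p 2 + (-1) * p 0 ≠ 0 := by rw [hg1]; simpa using hh1.ne'
  have h0 := aux_sin 1 x.1 hne1
  have h1 := aux_cos 1 x.2 hne1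
  have h2 := aux_sin (-1) x.1 hne2
  have h3 := aux_cos (-1) x.2 hne2
  simp only [one_mul, neg_one_mul, ← sub_eq_add_neg] at h0 h1 h2 h3
  have H : HasFDerivAt (tauInv x)
      (ContinuousLinearMap.pi ![Lsin 1 p, Lcos 1 p, Lsin (-1) p, Lcos (-1) p]) p := by
    apply hasFDerivAt_pi''
    intro i
    fin_cases i <;>
      simp only [ContinuousLinearMap.proj_pi, tauInv, Fin.isValue, Matrix.cons_val_zero,
        Matrix.cons_val_one, Matrix.head_cons, Matrix.cons_val_two, Matrix.tail_cons,
        Matrix.cons_val_three, Fin.mk_zero, Fin.mk_one]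
    · exact h0
    · exact h1
    · exact h2
    · exact h3
  rw [H.fderiv]
  set A := p 3 / p 2 with hA
  set S := Real.sin A with hS
  set C := Real.cos A with hC
  have hM : (Matrix.of fun i j : Fin 4 =>
      (ContinuousLinearMap.pi ![Lsin 1 p, Lcos 1 p, Lsin (-1) p, Lcos (-1) p])
        (Pi.single j 1) i) =
      !![S - A*C, C, S - A*C, C;
         C + A*S, -S, C + A*S, -S;
         -(S - A*C), -C, S - A*C, C;
         -(C + A*S), S, C + A*S, -S] := by
    ext i j
    fin_cases i <;> fin_cases j <;>
      simp [Lsin, Lcos, Uc, Vc, Pi.single_apply, hg1, hg2, hA, hS, hC] <;> ring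
  have key : S ^ 2 + C ^ 2 = 1 := Real.sin_sq_add_cos_sq A
  rw [hM, det_fin_four']
  linear_combination (4 * (S ^ 2 + C ^ 2) + 4) * key
end

section
/- Let M be the 3×3 matrix M = 2·[[sin α cos β − α cos α cos β + β sin α sin β, cos α cos β, −sin α sin β], [sin α sin β − α cos α sin β − β sin α cos β, cos α sin β, sin α cos β], [cos α + α sin α, −sin α, 0]]. Then det M = 8 sin α. -/
open Real in
theorem det_jacobian_block_3d (α β : ℝ) :
    Matrix.det ((2 : ℝ) •
      !![sin α * cos β - α * cos α * cos β + β * sin α * sin β, cos α * cos β, -(sin α * sin β);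
         sin α * sin β - α * cos α * sin β - β * sin α * cos β, cos α * sin β, sin α * cos β;
         cos α + α * sin α, -sin α, 0]) = 8 * sin α := by
  rw [Matrix.det_smul, Matrix.det_fin_three]
  norm_num [Matrix.cons_val_zero, Matrix.cons_val_one, Matrix.head_cons, Matrix.cons_val_two, Matrix.tail_cons]
  have h1 := sin_sq_add_cos_sq α
  have h2 := sin_sq_add_cos_sq β
  linear_combination sin α * (sin α ^ 2 + cos α ^ 2) * h2 + sin α * h1
end

section
/- Let X : [1,∞) × Ω → ℝ be a centered real-valued stochastic process with continuous sample paths such that |E[X(t₁)X(t₂)]| ≤ C(1 + |t₁ − t₂|)^{−ε} for some constants C > 0 and ε > 0 and all t₁, t₂ ≥ 1. Then (1/(K−1)) ∫₁^K X(t) dt → 0 almost surely as K → ∞. -/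
open MeasureTheory Filter Topology

lemma erg_pow_sub_pow_le (m : ℕ) {a b : ℝ} (hb : 0 ≤ b) (hba : b ≤ a) :
    a ^ m - b ^ m ≤ m * a ^ (m - 1) * (a - b) := by
  induction m with
  | zero => simp
  | succ m ih =>
    have ha : 0 ≤ a := hb.trans hba
    have hbm : b ^ m ≤ a ^ m := pow_le_pow_left₀ hb hba m
    have key : a ^ (m+1) - b ^ (m+1) = a * (a ^ m - b ^ m) + b ^ m * (a - b) := by ring
    have h1 : a * (a ^ m - b ^ m) ≤ a * (m * a ^ (m-1) * (a - b)) :=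
      mul_le_mul_of_nonneg_left ih ha
    have h2 : b ^ m * (a - b) ≤ a ^ m * (a - b) :=
      mul_le_mul_of_nonneg_right hbm (by linarith)
    have h3 : a * ((m : ℝ) * a ^ (m-1) * (a - b)) ≤ (m : ℝ) * a ^ m * (a - b) := by
      rcases Nat.eq_zero_or_pos m with hm | hm
      · simp [hm]
      · have hpow : a * a ^ (m - 1) = a ^ m := by
          rw [← pow_succ']
          congr 1
          omega
        refine le_of_eq ?_
        calc a * ((m : ℝ) * a ^ (m-1) * (a-b)) = (m : ℝ) * (a * a^(m-1)) * (a-b) := by ring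
        _ = (m : ℝ) * a ^ m * (a - b) := by rw [hpow]
    have h4 : ((m+1 : ℕ) : ℝ) * a ^ ((m+1) - 1) * (a - b)
        = (m : ℝ) * a ^ m * (a - b) + a ^ m * (a - b) := by
      push_cast
      ring
    rw [key, h4]
    linarith

lemma erg_joint_meas {Ω : Type*} [MeasureSpace Ω]
    (X : ℝ → Ω → ℝ) (hmeas : ∀ t, Measurable (X t))
    (hpaths : ∀ ω, ContinuousOn (fun t => X t ω) (Set.Ici 1)) :
    StronglyMeasurable (Function.uncurry fun t ω => X (max t 1) ω) := by
  apply stronglyMeasurable_uncurry_of_continuous_of_stronglyMeasurable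
  · intro ω
    have hc : Continuous fun t : ℝ => max t 1 := continuous_id.max continuous_const
    exact (hpaths ω).comp_continuous hc (fun t => le_max_right t 1)
  · intro t; exact (hmeas (max t 1)).stronglyMeasurable

lemma erg_fubini {Ω : Type*} [MeasureSpace Ω] [IsProbabilityMeasure (volume : Measure Ω)]
    (F : ℝ → Ω → ℝ) (hF : StronglyMeasurable (Function.uncurry F))
    (a b : ℝ) (C₀ : ℝ)
    (hInt : ∀ t s : ℝ, Integrable (fun ω => F t ω * F s ω))
    (hBnd : ∀ t s : ℝ, ∫ ω, |F t ω * F s ω| ≤ C₀) :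
    Integrable (fun ω => (∫ t in Set.Ioc a b, F t ω) ^ 2) ∧
      (∫ ω, (∫ t in Set.Ioc a b, F t ω) ^ 2
        = ∫ p, (∫ ω, F p.1 ω * F p.2 ω)
            ∂((volume.restrict (Set.Ioc a b)).prod (volume.restrict (Set.Ioc a b)))) ∧
      Integrable (fun p : ℝ × ℝ => ∫ ω, F p.1 ω * F p.2 ω)
        ((volume.restrict (Set.Ioc a b)).prod (volume.restrict (Set.Ioc a b))) := by
  set μ : Measure ℝ := volume.restrict (Set.Ioc a b) with hμ
  haveI : IsFiniteMeasure μ := by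
    constructor
    rw [Measure.restrict_apply_univ]
    exact (measure_Ioc_lt_top)
  set ν : Measure (ℝ × ℝ) := μ.prod μ with hν
  set G : (ℝ × ℝ) × Ω → ℝ := fun q => F q.1.1 q.2 * F q.1.2 q.2 with hG
  have hGsm : StronglyMeasurable G := by
    have h1 : Measurable fun q : (ℝ × ℝ) × Ω => (q.1.1, q.2) :=
      (measurable_fst.fst).prodMk measurable_snd
    have h2 : Measurable fun q : (ℝ × ℝ) × Ω => (q.1.2, q.2) :=
      (measurable_fst.snd).prodMk measurable_snd
    exact (hF.comp_measurable h1).mul (hF.comp_measurable h2)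
  have hGint : Integrable G (ν.prod (volume : Measure Ω)) := by
    rw [integrable_prod_iff hGsm.aestronglyMeasurable]
    constructor
    · exact Filter.Eventually.of_forall fun p => hInt p.1 p.2
    · have hsm : StronglyMeasurable fun p : ℝ × ℝ => ∫ ω, ‖G (p, ω)‖ :=
        hGsm.norm.integral_prod_right'
      refine Integrable.mono' (integrable_const C₀) hsm.aestronglyMeasurable ?_
      refine Filter.Eventually.of_forall fun p => ?_
      have h0 : (0:ℝ) ≤ ∫ ω, ‖G (p, ω)‖ := integral_nonneg fun ω => norm_nonneg _
      rw [Real.norm_eq_abs, abs_of_nonneg h0]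
      have : (fun ω => ‖G (p, ω)‖) = fun ω => |F p.1 ω * F p.2 ω| := by
        funext ω; rw [Real.norm_eq_abs]
      rw [this]
      exact hBnd p.1 p.2
  have h1 : ∀ ω, (∫ t in Set.Ioc a b, F t ω) ^ 2 = ∫ p, G (p, ω) ∂ν := by
    intro ω
    rw [sq]
    exact (integral_prod_mul (μ := μ) (ν := μ) (fun t => F t ω) (fun s => F s ω)).symm
  refine ⟨?_, ?_, ?_⟩
  · have := hGint.integral_prod_right
    refine this.congr ?_
    exact Filter.Eventually.of_forall fun ω => (h1 ω).symm
  · have h2 : ∫ ω, (∫ t in Set.Ioc a b, F t ω) ^ 2 = ∫ ω, ∫ p, G (p, ω) ∂ν := by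
      congr 1; funext ω; exact h1 ω
    rw [h2]
    have h3 := integral_integral_swap (μ := ν) (ν := (volume : Measure Ω))
      (f := fun p ω => G (p, ω)) (by exact hGint)
    exact h3.symm
  · exact hGint.integral_prod_left

lemma erg_band_bound {a b R M C : ℝ} (hab : a ≤ b) (hR : 0 ≤ R) (hM : 0 ≤ M) (hCpos : 0 ≤ C)
    (g : ℝ × ℝ → ℝ)
    (hg : Integrable g ((volume.restrict (Set.Ioc a b)).prod (volume.restrict (Set.Ioc a b))))
    (hbound : ∀ p : ℝ × ℝ, p.1 ∈ Set.Ioc a b → p.2 ∈ Set.Ioc a b →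
        g p ≤ C * Set.indicator {q : ℝ × ℝ | |q.1 - q.2| ≤ R} (fun _ => 1) p + C * M) :
    ∫ p, g p ∂((volume.restrict (Set.Ioc a b)).prod (volume.restrict (Set.Ioc a b)))
      ≤ C * (2*R) * (b - a) + C * M * (b-a)^2 := by
  set μ : Measure ℝ := volume.restrict (Set.Ioc a b) with hμdef
  haveI : IsFiniteMeasure μ := by
    constructor; rw [Measure.restrict_apply_univ]; exact measure_Ioc_lt_top
  set ν : Measure (ℝ × ℝ) := μ.prod μ with hνdef
  have hμuniv : μ Set.univ = ENNReal.ofReal (b - a) := by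
    rw [Measure.restrict_apply_univ, Real.volume_Ioc]
  set band : Set (ℝ × ℝ) := {q : ℝ × ℝ | |q.1 - q.2| ≤ R} with hbanddef
  have hset : MeasurableSet band :=
    measurableSet_le ((continuous_fst.sub continuous_snd).abs.measurable) measurable_const
  set φ : ℝ × ℝ → ℝ := fun p => C * Set.indicator band (fun _ => (1:ℝ)) p + C * M with hφdef
  have hφ1 : Integrable (fun p => C * Set.indicator band (fun _ => (1:ℝ)) p) ν :=
    (((integrable_const (1:ℝ)).indicator hset)).const_mul C
  have hφ2 : Integrable (fun _ : ℝ × ℝ => C * M) ν := integrable_const _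
  have hφint : Integrable φ ν := hφ1.add hφ2
  have hν : ν = (volume.prod volume).restrict (Set.Ioc a b ×ˢ Set.Ioc a b) :=
    Measure.prod_restrict _ _
  have hmono : ∀ᵐ p ∂ν, g p ≤ φ p := by
    rw [hν]
    filter_upwards [ae_restrict_mem (measurableSet_Ioc.prod measurableSet_Ioc)] with p hp
    exact hbound p hp.1 hp.2
  refine le_trans (integral_mono_ae hg hφint hmono) ?_
  have hband_meas : ν band ≤ ENNReal.ofReal (2*R*(b-a)) := by
    rw [hνdef, Measure.prod_apply hset]
    have hpre : ∀ t : ℝ, Prod.mk t ⁻¹' band = Set.Icc (t - R) (t + R) := by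
      intro t
      ext s
      simp only [hbanddef, Set.mem_preimage, Set.mem_setOf_eq, Set.mem_Icc, abs_le]
      constructor
      · rintro ⟨h1, h2⟩; constructor <;> linarith
      · rintro ⟨h1, h2⟩; constructor <;> linarith
    have h1 : ∀ t : ℝ, μ (Prod.mk t ⁻¹' band) ≤ ENNReal.ofReal (2*R) := by
      intro t
      rw [hpre t]
      refine le_trans (Measure.restrict_apply_le _ _) ?_
      rw [Real.volume_Icc]
      apply ENNReal.ofReal_le_ofReal
      ring_nf
      linarith
    refine le_trans (lintegral_mono h1) ?_
    rw [lintegral_const, hμuniv, ← ENNReal.ofReal_mul (by linarith)]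
  have hband_toReal : (ν band).toReal ≤ 2*R*(b-a) := by
    refine ENNReal.toReal_le_of_le_ofReal (by nlinarith) hband_meas
  have huniv : (ν Set.univ).toReal = (b-a)^2 := by
    rw [hνdef, ← Set.univ_prod_univ, Measure.prod_prod, hμuniv,
      ← ENNReal.ofReal_mul (by linarith), ENNReal.toReal_ofReal (by nlinarith)]
    ring
  have hφeq : ∫ p, φ p ∂ν = C * (ν band).toReal + (ν Set.univ).toReal * (C * M) := by
    rw [hφdef]
    rw [integral_add hφ1 hφ2, integral_const, integral_const_mul,
      integral_indicator_const (1:ℝ) hset]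
    simp [measureReal_def]
  rw [hφeq, huniv]
  have := mul_le_mul_of_nonneg_left hband_toReal hCpos
  nlinarith

lemma erg_floor (m : ℕ) (hm : 1 ≤ m) (N : ℕ) (Kr : ℝ) (h : 1 + ((N:ℝ)+1)^m ≤ Kr) :
    ∃ n : ℕ, N ≤ n ∧ 1 + ((n:ℝ)+1)^m ≤ Kr ∧ Kr ≤ 1 + ((n:ℝ)+2)^m := by
  have hN1 : (1:ℝ) ≤ ((N:ℝ)+1)^m := by
    calc (1:ℝ) = 1^m := (one_pow m).symm
    _ ≤ ((N:ℝ)+1)^m := pow_le_pow_left₀ (by norm_num) (by simp [Nat.cast_nonneg]) m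
  have hKr0 : (0:ℝ) ≤ Kr - 1 := by linarith
  have hmR : ((m:ℝ)) ≠ 0 := Nat.cast_ne_zero.mpr (by omega)
  set r : ℝ := (Kr - 1) ^ ((m:ℝ)⁻¹) with hrdef
  have hr0 : 0 ≤ r := Real.rpow_nonneg hKr0 _
  have hrm : r ^ m = Kr - 1 := by
    rw [hrdef, ← Real.rpow_natCast ((Kr - 1) ^ ((m:ℝ)⁻¹)) m, ← Real.rpow_mul hKr0,
      inv_mul_cancel₀ hmR, Real.rpow_one]
  have hrN : ((N:ℝ)+1) ≤ r := by
    have h1 : (((N:ℝ)+1)^m : ℝ) ^ ((m:ℝ)⁻¹) ≤ r :=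
      Real.rpow_le_rpow (by positivity) (by linarith) (by positivity)
    calc ((N:ℝ)+1) = (((N:ℝ)+1)^m) ^ ((m:ℝ)⁻¹) := by
          rw [← Real.rpow_natCast ((N:ℝ)+1) m, ← Real.rpow_mul (by positivity),
            mul_inv_cancel₀ hmR, Real.rpow_one]
    _ ≤ r := h1
  set q : ℕ := ⌊r⌋₊ with hqdef
  have hq1 : N + 1 ≤ q := by
    apply Nat.le_floor
    push_cast
    exact hrN
  refine ⟨q - 1, by omega, ?_, ?_⟩
  · have hcast : ((q - 1 : ℕ) : ℝ) + 1 = (q : ℝ) := by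
      have : q - 1 + 1 = q := by omega
      exact_mod_cast congrArg (Nat.cast (R := ℝ)) this
    rw [hcast]
    have h1 : (q:ℝ) ≤ r := Nat.floor_le hr0
    have h2 : (q:ℝ)^m ≤ r^m := pow_le_pow_left₀ (by positivity) h1 m
    rw [hrm] at h2
    linarith
  · have hcast : ((q - 1 : ℕ) : ℝ) + 2 = (q : ℝ) + 1 := by
      have : q - 1 + 1 = q := by omega
      have := congrArg (Nat.cast (R := ℝ)) this
      push_cast at this ⊢
      linarith
    rw [hcast]
    have h1 : r < (q:ℝ) + 1 := Nat.lt_floor_add_one r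
    have h2 : r^m ≤ ((q:ℝ)+1)^m := pow_le_pow_left₀ hr0 h1.le m
    rw [hrm] at h2
    linarith

lemma erg_ratio (m' n : ℕ) (C Δ : ℝ) (hC : 0 ≤ C) (hΔ0 : 0 ≤ Δ)
    (hΔ : Δ ≤ ((m'+1 : ℕ):ℝ) * 2^m' * (((n:ℝ)+1))^m') :
    ((((n:ℝ)+1)^(m'+1))⁻¹)^2 * (C * Δ^2)
      ≤ C * (((m'+1 : ℕ):ℝ) * 2^m')^2 * (1/((n:ℝ)+1)^2) := by
  set P : ℝ := (n:ℝ)+1 with hP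
  set M : ℝ := ((m'+1 : ℕ):ℝ) * 2^m' with hM
  have hPpos : (0:ℝ) < P := by positivity
  have hM0 : (0:ℝ) ≤ M := by positivity
  have hΔsq : Δ^2 ≤ (M * P^m')^2 := pow_le_pow_left₀ hΔ0 hΔ 2
  have e1 : ((P^(m'+1))⁻¹)^2 * (C * (M * P^m')^2) = C * M^2 * (1/P^2) := by
    rw [pow_succ]
    field_simp
    ring
  calc ((P^(m'+1))⁻¹)^2 * (C * Δ^2)
      ≤ ((P^(m'+1))⁻¹)^2 * (C * (M * P^m')^2) := by
        apply mul_le_mul_of_nonneg_left _ (by positivity)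
        exact mul_le_mul_of_nonneg_left hΔsq hC
    _ = C * M^2 * (1/P^2) := e1
set_option maxHeartbeats 2000000 in
theorem ergodicity_decaying_correlations
    (Ω : Type*) [MeasureSpace Ω] [IsProbabilityMeasure (volume : Measure Ω)]
    (X : ℝ → Ω → ℝ) (C ε : ℝ) (hC : 0 < C) (hε : 0 < ε)
    (hmeas : ∀ t, Measurable (X t))
    (hpaths : ∀ ω : Ω, ContinuousOn (fun t => X t ω) (Set.Ici 1))
    (hcen : ∀ t ≥ (1:ℝ), ∫ ω, X t ω = 0)
    (hint : ∀ t₁ ≥ (1:ℝ), ∀ t₂ ≥ (1:ℝ), Integrable (fun ω => X t₁ ω * X t₂ ω))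
    (hcov : ∀ t₁ ≥ (1:ℝ), ∀ t₂ ≥ (1:ℝ),
      |∫ ω, X t₁ ω * X t₂ ω| ≤ C * (1 + |t₁ - t₂|) ^ (-ε)) :
    ∀ᵐ ω : Ω, Tendsto (fun K => (K - 1)⁻¹ * ∫ t in (1:ℝ)..K, X t ω)
      atTop (𝓝 0) := by
  classical
  -- the modified process, continuous everywhere
  set Y : ℝ → Ω → ℝ := fun t ω => X (max t 1) ω with hYdef
  have hYsm : StronglyMeasurable (Function.uncurry Y) := erg_joint_meas X hmeas hpaths
  have hYcont : ∀ ω, Continuous fun t => Y t ω := fun ω =>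
    (hpaths ω).comp_continuous (continuous_id.max continuous_const) (fun t => le_max_right t 1)
  have hYint : ∀ t s : ℝ, Integrable (fun ω => Y t ω * Y s ω) :=
    fun t s => hint _ (le_max_right _ _) _ (le_max_right _ _)
  have hYcov : ∀ t s : ℝ, |∫ ω, Y t ω * Y s ω| ≤ C * (1 + |max t 1 - max s 1|) ^ (-ε) :=
    fun t s => hcov _ (le_max_right _ _) _ (le_max_right _ _)
  have hYsq : ∀ t : ℝ, ∫ ω, Y t ω * Y t ω ≤ C := by
    intro t
    have h1 := hYcov t t
    rw [sub_self, abs_zero, add_zero, Real.one_rpow, mul_one] at h1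
    exact le_trans (le_abs_self _) h1
  have hYabs : ∀ t s : ℝ, ∫ ω, |Y t ω * Y s ω| ≤ C := by
    intro t s
    have hpt : ∀ ω, |Y t ω * Y s ω| ≤ (Y t ω * Y t ω + Y s ω * Y s ω)/2 := by
      intro ω
      rw [abs_mul]
      nlinarith [sq_nonneg (|Y t ω| - |Y s ω|), abs_nonneg (Y t ω), abs_nonneg (Y s ω),
        sq_abs (Y t ω), sq_abs (Y s ω)]
    calc ∫ ω, |Y t ω * Y s ω|
        ≤ ∫ ω, (Y t ω * Y t ω + Y s ω * Y s ω)/2 :=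
          integral_mono (hYint t s).abs (((hYint t t).add (hYint s s)).div_const 2) hpt
      _ = ((∫ ω, Y t ω * Y t ω) + ∫ ω, Y s ω * Y s ω)/2 := by
          rw [integral_div, integral_add (hYint t t) (hYint s s)]
      _ ≤ C := by have := hYsq t; have := hYsq s; linarith
  -- exponents
  set δ : ℝ := min (1/2) (ε/2) with hδdef
  have hδpos : 0 < δ := lt_min (by norm_num) (by linarith)
  have hδhalf : δ ≤ 1/2 := min_le_left _ _
  have hδε : δ ≤ ε/2 := min_le_right _ _
  obtain ⟨m', hmm⟩ : ∃ m', ⌈2/δ⌉₊ = m' + 1 := by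
    have : 0 < ⌈2/δ⌉₊ := Nat.ceil_pos.mpr (by positivity)
    exact ⟨⌈2/δ⌉₊ - 1, by omega⟩
  set m : ℕ := m' + 1 with hmdef
  have hm2 : 2 ≤ (m:ℝ) * δ := by
    have h1 : 2/δ ≤ (m:ℝ) := by
      have h0 := Nat.le_ceil (2/δ)
      rw [hmm] at h0
      exact h0
    calc (2:ℝ) = (2/δ)*δ := by field_simp
    _ ≤ (m:ℝ) * δ := mul_le_mul_of_nonneg_right h1 hδpos.le
  -- the subsequence
  set K : ℕ → ℝ := fun n => 1 + ((n:ℝ)+1)^m with hKdef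
  set L : ℕ → ℝ := fun n => ((n:ℝ)+1)^m with hLdef
  have hL1 : ∀ n, 1 ≤ L n := by
    intro n
    calc (1:ℝ) = 1^m := (one_pow m).symm
    _ ≤ ((n:ℝ)+1)^m := pow_le_pow_left₀ (by norm_num) (by simp [Nat.cast_nonneg]) m
  have hLpos : ∀ n, 0 < L n := fun n => lt_of_lt_of_le one_pos (hL1 n)
  have hK1 : ∀ n, 1 ≤ K n := by intro n; have := hL1 n; simp only [hKdef]; nlinarith [hL1 n]
  have hKL : ∀ n, K n - 1 = L n := by intro n; simp [hKdef, hLdef]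
  have hKmono : ∀ n, K n ≤ K (n+1) := by
    intro n
    simp only [hKdef]
    have h0 : ((n:ℝ)+1)^m ≤ ((n:ℝ)+1+1)^m := pow_le_pow_left₀ (by positivity) (by linarith) m
    push_cast
    linarith
  -- the two sequences of random variables
  set A : ℕ → Ω → ℝ := fun n ω => (L n)⁻¹ * ∫ t in Set.Ioc 1 (K n), Y t ω with hAdef
  set Bb : ℕ → Ω → ℝ := fun n ω => ∫ t in Set.Ioc (K n) (K (n+1)), |Y t ω| with hBdef
  have hBnonneg : ∀ n ω, 0 ≤ Bb n ω := fun n ω =>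
    setIntegral_nonneg measurableSet_Ioc (fun t _ => abs_nonneg _)
  have key1 : ∀ n, Integrable (fun ω => (A n ω)^2) ∧
      ∫ ω, (A n ω)^2 ≤ 3*C * (1/((n:ℝ)+1)^2) := by
    intro n
    obtain ⟨hSint, hSeq, hgint⟩ := erg_fubini Y hYsm 1 (K n) C hYint hYabs
    have hLr1 : 1 ≤ L n := hL1 n
    have hLrpos : 0 < L n := hLpos n
    set R : ℝ := (L n) ^ ((1:ℝ)/2) with hRdef
    have hR1 : 1 ≤ R := by
      have := Real.rpow_le_rpow (by norm_num : (0:ℝ) ≤ 1) hLr1 (by norm_num : (0:ℝ) ≤ 1/2)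
      rwa [Real.one_rpow] at this
    have hR0 : 0 ≤ R := by linarith
    set M : ℝ := (1 + R) ^ (-ε) with hMdef
    have hM0 : 0 ≤ M := Real.rpow_nonneg (by linarith) _
    have hband : ∫ p, (∫ ω, Y p.1 ω * Y p.2 ω)
          ∂((volume.restrict (Set.Ioc 1 (K n))).prod (volume.restrict (Set.Ioc 1 (K n))))
        ≤ C * (2*R) * (K n - 1) + C * M * (K n - 1)^2 := by
      apply erg_band_bound (hK1 n) hR0 hM0 hC.le _ hgint
      intro p hp1 hp2
      have ht : max p.1 1 = p.1 := max_eq_left (le_of_lt hp1.1)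
      have hs : max p.2 1 = p.2 := max_eq_left (le_of_lt hp2.1)
      have hcv := hYcov p.1 p.2
      rw [ht, hs] at hcv
      have hle : ∫ ω, Y p.1 ω * Y p.2 ω ≤ C * (1+|p.1-p.2|)^(-ε) :=
        le_trans (le_abs_self _) hcv
      have habs0 : (0:ℝ) ≤ |p.1 - p.2| := abs_nonneg _
      by_cases hcase : |p.1 - p.2| ≤ R
      · rw [Set.indicator_of_mem (show p ∈ {q : ℝ × ℝ | |q.1 - q.2| ≤ R} from hcase)]
        have h1 : (1+|p.1-p.2|)^(-ε) ≤ 1 :=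
          Real.rpow_le_one_of_one_le_of_nonpos (by linarith) (by linarith)
        have h2 : C * (1+|p.1-p.2|)^(-ε) ≤ C * 1 := mul_le_mul_of_nonneg_left h1 hC.le
        have h3 : 0 ≤ C * M := mul_nonneg hC.le hM0
        linarith
      · rw [Set.indicator_of_notMem (show p ∉ {q : ℝ × ℝ | |q.1 - q.2| ≤ R} from hcase)]
        push_neg at hcase
        have h1 : (1+|p.1-p.2|)^(-ε) ≤ (1+R)^(-ε) :=
          Real.rpow_le_rpow_of_nonpos (by linarith) (by linarith) (by linarith)
        have h2 : C * (1+|p.1-p.2|)^(-ε) ≤ C * M := mul_le_mul_of_nonneg_left h1 hC.le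
        have h3 : 0 ≤ C * M := mul_nonneg hC.le hM0
        linarith
    rw [hKL n] at hband
    -- rpow calculus
    have hRL : R * L n = (L n) ^ ((3:ℝ)/2) := by
      rw [hRdef, ← Real.rpow_add_one (ne_of_gt hLrpos)]
      norm_num
    have hps : (L n) ^ ((3:ℝ)/2) ≤ (L n) ^ ((2:ℝ)-δ) :=
      Real.rpow_le_rpow_of_exponent_le hLr1 (by linarith)
    have hMle : M ≤ (L n) ^ (-δ) := by
      have h1 : M ≤ R ^ (-ε) :=
        Real.rpow_le_rpow_of_nonpos (by linarith) (by linarith) (by linarith)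
      have h2 : R ^ (-ε) = (L n) ^ ((1/2) * (-ε)) := by
        rw [hRdef, ← Real.rpow_mul hLrpos.le]
      have h3 : (L n) ^ ((1/2) * (-ε)) ≤ (L n) ^ (-δ) :=
        Real.rpow_le_rpow_of_exponent_le hLr1 (by linarith)
      linarith
    have hsplit : (L n) ^ ((2:ℝ)-δ) = (L n)^2 * (L n)^(-δ) := by
      rw [show ((2:ℝ)-δ) = ((2:ℕ):ℝ) + (-δ) by push_cast; ring, Real.rpow_add hLrpos,
        Real.rpow_natCast]
    have hS2 : ∫ ω, (∫ t in Set.Ioc 1 (K n), Y t ω)^2 ≤ 3*C*(L n)^((2:ℝ)-δ) := by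
      rw [hSeq]
      have t1 : C * (2*R) * (L n) ≤ 2*C*(L n)^((2:ℝ)-δ) := by
        have : C * (2*R) * L n = 2*C*(R * L n) := by ring
        rw [this, hRL]
        exact mul_le_mul_of_nonneg_left hps (by positivity)
      have t2 : C * M * (L n)^2 ≤ C * (L n)^((2:ℝ)-δ) := by
        rw [hsplit]
        have h1 : M * (L n)^2 ≤ (L n)^(-δ) * (L n)^2 :=
          mul_le_mul_of_nonneg_right hMle (by positivity)
        calc C * M * (L n)^2 = C * (M * (L n)^2) := by ring
        _ ≤ C * ((L n)^(-δ) * (L n)^2) := mul_le_mul_of_nonneg_left h1 hC.le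
        _ = C * ((L n)^2 * (L n)^(-δ)) := by ring
      linarith
    -- divide by L n ^ 2
    have hAfun : (fun ω => (A n ω)^2)
        = fun ω => ((L n)⁻¹)^2 * (∫ t in Set.Ioc 1 (K n), Y t ω)^2 := by
      funext ω
      simp only [hAdef]
      ring
    constructor
    · rw [hAfun]; exact hSint.const_mul _
    · rw [hAfun, integral_const_mul]
      have h1 : ((L n)⁻¹)^2 * ∫ ω, (∫ t in Set.Ioc 1 (K n), Y t ω)^2
          ≤ ((L n)⁻¹)^2 * (3*C*(L n)^((2:ℝ)-δ)) :=
        mul_le_mul_of_nonneg_left hS2 (by positivity)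
      have h2 : ((L n)⁻¹)^2 * (3*C*(L n)^((2:ℝ)-δ)) = 3*C*(L n)^(-δ) := by
        rw [hsplit]
        field_simp
      have h3 : (L n)^(-δ) ≤ 1/((n:ℝ)+1)^2 := by
        have hn1 : (0:ℝ) ≤ (n:ℝ)+1 := by positivity
        have e1 : (L n)^(-δ) = ((n:ℝ)+1) ^ ((m:ℝ) * (-δ)) := by
          rw [hLdef]
          simp only
          rw [← Real.rpow_natCast ((n:ℝ)+1) m, ← Real.rpow_mul hn1]
        have e2 : ((n:ℝ)+1) ^ ((m:ℝ) * (-δ)) ≤ ((n:ℝ)+1) ^ (-(2:ℝ)) := by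
          apply Real.rpow_le_rpow_of_exponent_le (by simp [Nat.cast_nonneg])
          nlinarith
        have e3 : ((n:ℝ)+1) ^ (-(2:ℝ)) = 1/((n:ℝ)+1)^2 := by
          rw [Real.rpow_neg hn1, show ((2:ℝ)) = ((2:ℕ):ℝ) by norm_num, Real.rpow_natCast]
          rw [one_div]
        rw [e1]
        rw [e3] at e2
        exact e2
      have h4 : 3*C*(L n)^(-δ) ≤ 3*C*(1/((n:ℝ)+1)^2) :=
        mul_le_mul_of_nonneg_left h3 (by positivity)
      linarith
  have key2 : ∀ n, Integrable (fun ω => ((L n)⁻¹ * Bb n ω)^2) ∧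
      ∫ ω, ((L n)⁻¹ * Bb n ω)^2 ≤ C*((m:ℝ) * 2^m')^2 * (1/((n:ℝ)+1)^2) := by
    intro n
    have hYsm' : StronglyMeasurable (Function.uncurry fun t (ω : Ω) => |Y t ω|) :=
      continuous_abs.comp_stronglyMeasurable hYsm
    have hYint' : ∀ t s : ℝ, Integrable (fun ω => |Y t ω| * |Y s ω|) := by
      intro t s
      refine (hYint t s).abs.congr (Filter.Eventually.of_forall fun ω => ?_)
      show |Y t ω * Y s ω| = |Y t ω| * |Y s ω|
      rw [abs_mul]
    have hYabs' : ∀ t s : ℝ, ∫ ω, |(|Y t ω| * |Y s ω|)| ≤ C := by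
      intro t s
      have he : (fun ω => |(|Y t ω| * |Y s ω|)|) = fun ω => |Y t ω * Y s ω| := by
        funext ω
        rw [← abs_mul, abs_abs]
      rw [he]
      exact hYabs t s
    obtain ⟨hBint, hBeq, hBgint⟩ :=
      erg_fubini (fun t ω => |Y t ω|) hYsm' (K n) (K (n+1)) C hYint' hYabs'
    set Δ : ℝ := K (n+1) - K n with hΔdef
    have hΔ0 : 0 ≤ Δ := by have := hKmono n; linarith
    have hgb : ∫ p, (∫ ω, |Y p.1 ω| * |Y p.2 ω|)
          ∂((volume.restrict (Set.Ioc (K n) (K (n+1)))).prod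
            (volume.restrict (Set.Ioc (K n) (K (n+1)))))
        ≤ C * Δ^2 := by
      set ν' := (volume.restrict (Set.Ioc (K n) (K (n+1)))).prod
            (volume.restrict (Set.Ioc (K n) (K (n+1)))) with hν'
      haveI : IsFiniteMeasure (volume.restrict (Set.Ioc (K n) (K (n+1)))) := by
        constructor; rw [Measure.restrict_apply_univ]; exact measure_Ioc_lt_top
      have hpt : ∀ p : ℝ × ℝ, (fun p : ℝ × ℝ => ∫ ω, |Y p.1 ω| * |Y p.2 ω|) p ≤ C := by
        intro p
        have he : (fun ω => |Y p.1 ω| * |Y p.2 ω|) = fun ω => |Y p.1 ω * Y p.2 ω| := by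
          funext ω; rw [abs_mul]
        simp only
        rw [he]
        exact hYabs p.1 p.2
      refine le_trans (integral_mono hBgint (integrable_const C) hpt) ?_
      rw [integral_const]
      have huniv : (ν' Set.univ).toReal = Δ^2 := by
        rw [hν', ← Set.univ_prod_univ, Measure.prod_prod, Measure.restrict_apply_univ,
          Real.volume_Ioc, ← ENNReal.ofReal_mul (by linarith),
          ENNReal.toReal_ofReal (by nlinarith)]
        rw [hΔdef]
        ring
      rw [measureReal_def, huniv]
      rw [smul_eq_mul]
      nlinarith
    -- now bound the normalized quantity
    have hBfun : (fun ω => ((L n)⁻¹ * Bb n ω)^2)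
        = fun ω => ((L n)⁻¹)^2 * (∫ t in Set.Ioc (K n) (K (n+1)), |Y t ω|)^2 := by
      funext ω
      simp only [hBdef]
      ring
    have hΔle : Δ ≤ ((m'+1 : ℕ):ℝ) * 2^m' * (((n:ℝ)+1))^m' := by
      have hc1 : K (n+1) = 1 + ((n:ℝ)+2)^m := by
        simp only [hKdef]
        push_cast
        ring_nf
      have hΔeq : Δ = ((n:ℝ)+2)^m - ((n:ℝ)+1)^m := by
        rw [hΔdef, hc1]
        simp only [hKdef]
        ring
      have hsub := erg_pow_sub_pow_le m (show (0:ℝ) ≤ (n:ℝ)+1 by positivity)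
        (show ((n:ℝ)+1) ≤ (n:ℝ)+2 by linarith)
      have hm1 : m - 1 = m' := by omega
      rw [hm1] at hsub
      have h2 : ((n:ℝ)+2)^m' ≤ (2*((n:ℝ)+1))^m' :=
        pow_le_pow_left₀ (by positivity) (by linarith) m'
      rw [mul_pow] at h2
      have h3 : ((n:ℝ)+2) - ((n:ℝ)+1) = 1 := by ring
      rw [h3, mul_one] at hsub
      rw [hΔeq]
      calc ((n:ℝ)+2)^m - ((n:ℝ)+1)^m ≤ (m:ℝ) * ((n:ℝ)+2)^m' := hsub
      _ ≤ (m:ℝ) * (2^m' * ((n:ℝ)+1)^m') := by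
          apply mul_le_mul_of_nonneg_left h2 (by positivity)
      _ = ((m'+1 : ℕ):ℝ) * 2^m' * (((n:ℝ)+1))^m' := by
          rw [hmdef]
          ring
    have hratio := erg_ratio m' n C Δ hC.le hΔ0 hΔle
    constructor
    · rw [hBfun]
      exact hBint.const_mul _
    · rw [hBfun, integral_const_mul]
      have h1 : ((L n)⁻¹)^2 * ∫ ω, (∫ t in Set.Ioc (K n) (K (n+1)), |Y t ω|)^2
          ≤ ((L n)⁻¹)^2 * (C * Δ^2) := by
        apply mul_le_mul_of_nonneg_left _ (by positivity)
        rw [hBeq]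
        exact hgb
      have h2 : ((L n)⁻¹)^2 * (C * Δ^2)
          ≤ C * (((m'+1 : ℕ):ℝ) * 2^m')^2 * (1/((n:ℝ)+1)^2) := by
        have : (L n)⁻¹ = (((n:ℝ)+1)^(m'+1))⁻¹ := by rw [hLdef]
        rw [this]
        exact hratio
      have h3 : C * (((m'+1 : ℕ):ℝ) * 2^m')^2 * (1/((n:ℝ)+1)^2)
          = C*((m:ℝ) * 2^m')^2 * (1/((n:ℝ)+1)^2) := by
        rw [hmdef]
      linarith
  -- summability and almost-everywhere convergence
  set F : ℕ → Ω → ℝ := fun n ω => (A n ω)^2 + ((L n)⁻¹ * Bb n ω)^2 with hFdef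
  have hFnonneg : ∀ n ω, 0 ≤ F n ω := fun n ω => by positivity
  have hFint : ∀ n, Integrable (F n) := fun n => ((key1 n).1.add (key2 n).1)
  set cst : ℝ := 3*C + C*((m:ℝ) * 2^m')^2 with hcst
  have hFbound : ∀ n, ∫ ω, F n ω ≤ cst * (1/((n:ℝ)+1)^2) := by
    intro n
    have hexp : cst * (1/((n:ℝ)+1)^2)
        = 3*C*(1/((n:ℝ)+1)^2) + C*((m:ℝ)*2^m')^2*(1/((n:ℝ)+1)^2) := by
      rw [hcst]; ring
    have h1 := (key1 n).2
    have h2 := (key2 n).2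
    have h3 : ∫ ω, F n ω = (∫ ω, (A n ω)^2) + ∫ ω, ((L n)⁻¹ * Bb n ω)^2 := by
      rw [hFdef]
      exact integral_add (key1 n).1 (key2 n).1
    rw [h3, hexp]
    linarith
  have hsummable : Summable (fun n : ℕ => cst * (1/((n:ℝ)+1)^2)) := by
    apply Summable.mul_left
    have h0 : Summable (fun n : ℕ => 1/((n:ℝ)^2)) :=
      Real.summable_one_div_nat_pow.mpr (by norm_num)
    have h1 := (summable_nat_add_iff 1).mpr h0
    refine h1.congr fun n => ?_
    push_cast
    ring
  have hmeasF : ∀ n, AEMeasurable (fun ω => ENNReal.ofReal (F n ω)) (volume : Measure Ω) :=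
    fun n => ENNReal.measurable_ofReal.comp_aemeasurable
      (hFint n).aestronglyMeasurable.aemeasurable
  have hlint : ∫⁻ ω, ∑' n, ENNReal.ofReal (F n ω) ≠ ⊤ := by
    rw [lintegral_tsum hmeasF]
    have h1 : ∀ n, ∫⁻ ω, ENNReal.ofReal (F n ω) = ENNReal.ofReal (∫ ω, F n ω) := fun n =>
      (ofReal_integral_eq_lintegral_ofReal (hFint n)
        (Filter.Eventually.of_forall (hFnonneg n))).symm
    refine ne_of_lt (lt_of_le_of_lt (b := ENNReal.ofReal (∑' n : ℕ, cst * (1/((n:ℝ)+1)^2)))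
      ?_ ENNReal.ofReal_lt_top)
    calc ∑' n, ∫⁻ ω, ENNReal.ofReal (F n ω)
        = ∑' n, ENNReal.ofReal (∫ ω, F n ω) := tsum_congr h1
      _ ≤ ∑' n : ℕ, ENNReal.ofReal (cst * (1/((n:ℝ)+1)^2)) :=
          ENNReal.tsum_le_tsum fun n => ENNReal.ofReal_le_ofReal (hFbound n)
      _ = ENNReal.ofReal (∑' n : ℕ, cst * (1/((n:ℝ)+1)^2)) :=
          (ENNReal.ofReal_tsum_of_nonneg (fun n => by positivity) hsummable).symm
  have hae : ∀ᵐ ω : Ω, Tendsto (fun n => A n ω) atTop (𝓝 0) ∧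
      Tendsto (fun n => (L n)⁻¹ * Bb n ω) atTop (𝓝 0) := by
    have h2 : ∀ᵐ ω : Ω, ∑' n, ENNReal.ofReal (F n ω) < ⊤ :=
      ae_lt_top' (AEMeasurable.ennreal_tsum hmeasF) hlint
    filter_upwards [h2] with ω hω
    have hsumF : Summable (fun n => F n ω) := by
      have h3 := ENNReal.summable_toReal hω.ne
      refine h3.congr fun n => ?_
      rw [ENNReal.toReal_ofReal (hFnonneg n ω)]
    have hF0 : Tendsto (fun n => F n ω) atTop (𝓝 0) := hsumF.tendsto_atTop_zero
    have hsF : Tendsto (fun n => Real.sqrt (F n ω)) atTop (𝓝 0) := by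
      have h4 := (Real.continuous_sqrt.tendsto 0).comp hF0
      simpa [Function.comp_def] using h4
    have hsFneg : Tendsto (fun n => -Real.sqrt (F n ω)) atTop (𝓝 0) := by
      have := hsF.neg
      simpa using this
    constructor
    · refine tendsto_of_tendsto_of_tendsto_of_le_of_le hsFneg hsF ?_ ?_
      · intro n
        have hb : |A n ω| ≤ Real.sqrt (F n ω) := by
          rw [← Real.sqrt_sq_eq_abs]
          apply Real.sqrt_le_sqrt
          have h5 : 0 ≤ ((L n)⁻¹ * Bb n ω)^2 := sq_nonneg _
          simp only [hFdef]
          linarith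
        have h6 := abs_le.mp hb
        show -Real.sqrt (F n ω) ≤ A n ω
        linarith [h6.1]
      · intro n
        have hb : |A n ω| ≤ Real.sqrt (F n ω) := by
          rw [← Real.sqrt_sq_eq_abs]
          apply Real.sqrt_le_sqrt
          have h5 : 0 ≤ ((L n)⁻¹ * Bb n ω)^2 := sq_nonneg _
          simp only [hFdef]
          linarith
        exact le_trans (le_abs_self _) hb
    · refine tendsto_of_tendsto_of_tendsto_of_le_of_le hsFneg hsF ?_ ?_
      · intro n
        have h6 : 0 ≤ (L n)⁻¹ * Bb n ω := mul_nonneg (by positivity) (hBnonneg n ω)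
        have h7 : 0 ≤ Real.sqrt (F n ω) := Real.sqrt_nonneg _
        show -Real.sqrt (F n ω) ≤ (L n)⁻¹ * Bb n ω
        linarith
      · intro n
        have hb : |(L n)⁻¹ * Bb n ω| ≤ Real.sqrt (F n ω) := by
          rw [← Real.sqrt_sq_eq_abs]
          apply Real.sqrt_le_sqrt
          have h5 : 0 ≤ (A n ω)^2 := sq_nonneg _
          simp only [hFdef]
          linarith
        exact le_trans (le_abs_self _) hb
  -- deterministic endgame
  filter_upwards [hae] with ω hω
  obtain ⟨hA, hB⟩ := hω
  rw [Metric.tendsto_atTop]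
  intro η hη
  obtain ⟨N₁, hN₁⟩ := (Metric.tendsto_atTop.mp hA) (η/2) (by linarith)
  obtain ⟨N₂, hN₂⟩ := (Metric.tendsto_atTop.mp hB) (η/2) (by linarith)
  refine ⟨K (max N₁ N₂), fun Kr hKr => ?_⟩
  have hKrN : 1 + (((max N₁ N₂ : ℕ):ℝ)+1)^m ≤ Kr := by
    rw [hKdef] at hKr
    exact hKr
  obtain ⟨n, hnN, hlow, hhigh⟩ := erg_floor m (by omega) (max N₁ N₂) Kr hKrN
  have hKn_le : K n ≤ Kr := by rw [hKdef]; exact hlow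
  have hKr_le : Kr ≤ K (n+1) := by
    rw [hKdef]
    simp only
    push_cast
    have : ((n:ℝ)+1+1) = ((n:ℝ)+2) := by ring
    rw [this]
    exact hhigh
  have hLKr : L n ≤ Kr - 1 := by
    have h8 := hKL n
    linarith
  have hKr1 : 0 < Kr - 1 := by linarith [hL1 n]
  have hii : ∀ a b : ℝ, IntervalIntegrable (fun t => Y t ω) volume a b :=
    fun a b => (hYcont ω).intervalIntegrable a b
  have hXY : ∫ t in (1:ℝ)..Kr, X t ω = ∫ t in (1:ℝ)..Kr, Y t ω := by
    rw [intervalIntegral.integral_of_le (by linarith : (1:ℝ) ≤ Kr),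
        intervalIntegral.integral_of_le (by linarith : (1:ℝ) ≤ Kr)]
    apply setIntegral_congr_fun measurableSet_Ioc
    intro t ht
    show X t ω = Y t ω
    rw [hYdef]
    simp only
    rw [max_eq_left ht.1.le]
  have hsplit2 : ∫ t in (1:ℝ)..Kr, Y t ω
      = (∫ t in (1:ℝ)..(K n), Y t ω) + ∫ t in (K n)..Kr, Y t ω :=
    (intervalIntegral.integral_add_adjacent_intervals (hii _ _) (hii _ _)).symm
  have hS : ∫ t in (1:ℝ)..(K n), Y t ω = L n * A n ω := by
    rw [hAdef]
    simp only
    rw [intervalIntegral.integral_of_le (hK1 n)]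
    rw [← mul_assoc, mul_inv_cancel₀ (ne_of_gt (hLpos n)), one_mul]
  have hT : |∫ t in (K n)..Kr, Y t ω| ≤ Bb n ω := by
    rw [intervalIntegral.integral_of_le hKn_le]
    have hint_on : IntegrableOn (fun t => |Y t ω|) (Set.Ioc (K n) (K (n+1))) volume :=
      ((hYcont ω).abs).integrableOn_Ioc
    have h9 : |∫ t in Set.Ioc (K n) Kr, Y t ω| ≤ ∫ t in Set.Ioc (K n) Kr, |Y t ω| := by
      have := norm_integral_le_integral_norm (μ := volume.restrict (Set.Ioc (K n) Kr))
        (fun t => Y t ω)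
      simpa [Real.norm_eq_abs] using this
    refine le_trans h9 ?_
    rw [hBdef]
    simp only
    refine setIntegral_mono_set hint_on
      (Filter.Eventually.of_forall fun t => abs_nonneg _)
      (HasSubset.Subset.eventuallyLE (Set.Ioc_subset_Ioc_right hKr_le))
  -- put it together
  have h10 : n ≥ N₁ := le_trans (le_max_left _ _) hnN
  have h11 : n ≥ N₂ := le_trans (le_max_right _ _) hnN
  have h12 : |A n ω| < η/2 := by
    have := hN₁ n h10
    rwa [Real.dist_eq, sub_zero] at this
  have h13 : (L n)⁻¹ * Bb n ω < η/2 := by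
    have := hN₂ n h11
    rw [Real.dist_eq, sub_zero] at this
    exact lt_of_le_of_lt (le_abs_self _) this
  rw [Real.dist_eq, sub_zero, hXY, hsplit2, hS]
  set T : ℝ := ∫ t in (K n)..Kr, Y t ω with hTdef
  have habs : |L n * A n ω + T| ≤ L n * |A n ω| + Bb n ω := by
    refine le_trans (abs_add_le _ _) ?_
    rw [abs_mul, abs_of_nonneg (hLpos n).le]
    linarith
  rw [abs_mul, abs_of_nonneg (inv_nonneg.mpr hKr1.le)]
  have hstep : (Kr - 1)⁻¹ * |L n * A n ω + T|
      ≤ (Kr - 1)⁻¹ * (L n * |A n ω| + Bb n ω) :=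
    mul_le_mul_of_nonneg_left habs (inv_nonneg.mpr hKr1.le)
  have t1 : (Kr - 1)⁻¹ * (L n * |A n ω|) ≤ |A n ω| := by
    have hle1 : (Kr - 1)⁻¹ * L n ≤ 1 := by
      rw [inv_mul_le_iff₀ hKr1]
      linarith
    calc (Kr - 1)⁻¹ * (L n * |A n ω|) = ((Kr - 1)⁻¹ * L n) * |A n ω| := by ring
    _ ≤ 1 * |A n ω| := mul_le_mul_of_nonneg_right hle1 (abs_nonneg _)
    _ = |A n ω| := one_mul _
  have t2 : (Kr - 1)⁻¹ * Bb n ω ≤ (L n)⁻¹ * Bb n ω :=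
    mul_le_mul_of_nonneg_right (inv_anti₀ (hLpos n) hLKr) (hBnonneg n ω)
  have hfin : (Kr - 1)⁻¹ * (L n * |A n ω| + Bb n ω)
      = (Kr - 1)⁻¹ * (L n * |A n ω|) + (Kr - 1)⁻¹ * Bb n ω := by ring
  rw [hfin] at hstep
  linarith
end
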